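/- Let A and B be positive definite matrices with A ⪰ B (A − B positive semidefinite). Then for every nonzero vector x, (xᵀ A x)/(xᵀ B x) ≤ det(A)/det(B). -/

import Mathlib

open Matrix Finset RealInnerProductSpace

lemma conj_dot {n : ℕ} (P M : Matrix (Fin n) (Fin n) ℝ) (y : Fin n → ℝ) :
    (P *ᵥ y) ⬝ᵥ (M *ᵥ (P *ᵥ y)) = y ⬝ᵥ ((Pᵀ * M * P) *ᵥ y) := by
  conv_rhs => rw [← mulVec_mulVec, ← mulVec_mulVec, dotProduct_mulVec, vecMul_transpose]

theorem quadForm_ratio_le_det_ratio {n : ℕ} (A B : Matrix (Fin n) (Fin n) ℝ)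
    (hA : A.PosDef) (hB : B.PosDef) (hAB : (A - B).PosSemidef)
    (x : Fin n → ℝ) (hx : x ≠ 0) :
    (x ⬝ᵥ A.mulVec x) / (x ⬝ᵥ B.mulVec x) ≤ A.det / B.det := by
  set S := (open scoped MatrixOrder in CFC.sqrt B) with hSdef
  have hS : S.PosSemidef := by open scoped MatrixOrder in exact (CFC.sqrt_nonneg B).posSemidef
  have hSS : S * S = B := by open scoped MatrixOrder in exact CFC.sqrt_mul_sqrt_self B hB.posSemidef.nonneg
  have hSherm : Sᵀ = S := by
    rw [← conjTranspose_eq_transpose_of_trivial]; exact hS.1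
  have hSdet : S.det * S.det = B.det := by rw [← det_mul, hSS]
  have hSdetne : S.det ≠ 0 := by
    intro h; rw [h, mul_zero] at hSdet; exact hB.det_pos.ne hSdet
  set T := S⁻¹ with hTdef
  have hTS : T * S = 1 := nonsing_inv_mul S hSdetne.isUnit
  have hST : S * T = 1 := mul_nonsing_inv S hSdetne.isUnit
  have hTherm : Tᵀ = T := by rw [hTdef, transpose_nonsing_inv, hSherm]
  set C := T * A * T with hCdef
  have hCherm : C.IsHermitian := by
    show Cᴴ = C
    rw [conjTranspose_eq_transpose_of_trivial, hCdef, transpose_mul, transpose_mul, hTherm,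
      ← conjTranspose_eq_transpose_of_trivial A, hA.1.eq, Matrix.mul_assoc]
  have hTBT : T * B * T = 1 := by
    rw [← hSS]; simp only [Matrix.mul_assoc]; rw [hST, mul_one, hTS]
  have hC1 : (C - 1).PosSemidef := by
    have h := hAB.mul_mul_conjTranspose_same T
    have heq : T * (A - B) * Tᴴ = C - 1 := by
      rw [conjTranspose_eq_transpose_of_trivial, hTherm, Matrix.mul_sub, Matrix.sub_mul, hTBT]
    rwa [heq] at h
  -- eigenvalues of C are ≥ 1
  have hev : ∀ i, 1 ≤ hCherm.eigenvalues i := by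
    intro i
    set v : Fin n → ℝ := ⇑(hCherm.eigenvectorBasis i) with hv
    have hvv : v ⬝ᵥ v = 1 := by
      have h1 : ‖hCherm.eigenvectorBasis i‖ = 1 := hCherm.eigenvectorBasis.orthonormal.1 i
      have h2 : (inner ℝ (hCherm.eigenvectorBasis i) (hCherm.eigenvectorBasis i) : ℝ) = 1 := by
        rw [real_inner_self_eq_norm_sq, h1]; norm_num
      rw [EuclideanSpace.inner_eq_star_dotProduct] at h2
      simpa [dotProduct, dotProduct_comm] using h2
    have hmv : C *ᵥ v = hCherm.eigenvalues i • v := hCherm.mulVec_eigenvectorBasis i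
    have hpos := hC1.dotProduct_mulVec_nonneg v
    simp only [sub_mulVec, one_mulVec, hmv, dotProduct_sub, dotProduct_smul, hvv,
      smul_eq_mul, mul_one, star_trivial] at hpos
    linarith
  set lam := hCherm.eigenvalues with hlam
  set U : Matrix (Fin n) (Fin n) ℝ := (hCherm.eigenvectorUnitary : Matrix (Fin n) (Fin n) ℝ)
    with hU
  have hspec : C = U * diagonal lam * Uᵀ := by
    have h := hCherm.spectral_theorem
    rw [← conjTranspose_eq_transpose_of_trivial, ← star_eq_conjTranspose]
    simpa using h
  have hUU : U * Uᵀ = 1 := by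
    rw [← conjTranspose_eq_transpose_of_trivial, ← star_eq_conjTranspose]
    exact mem_unitaryGroup_iff.mp hCherm.eigenvectorUnitary.2
  have hSCS : Sᵀ * C * S = A := by
    rw [hSherm, hCdef]
    simp only [Matrix.mul_assoc]
    rw [hTS, Matrix.mul_one, ← Matrix.mul_assoc, hST, Matrix.one_mul]
  have hAx : x ⬝ᵥ A *ᵥ x = ∑ i, lam i * ((Uᵀ *ᵥ (S *ᵥ x)) i) ^ 2 := by
    have e1 : x ⬝ᵥ A *ᵥ x = (S *ᵥ x) ⬝ᵥ (C *ᵥ (S *ᵥ x)) := by rw [conj_dot, hSCS]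
    have e2 : (S *ᵥ x) ⬝ᵥ (C *ᵥ (S *ᵥ x))
        = (Uᵀ *ᵥ (S *ᵥ x)) ⬝ᵥ (diagonal lam *ᵥ (Uᵀ *ᵥ (S *ᵥ x))) := by
      conv_rhs => rw [conj_dot, transpose_transpose]
      rw [← hspec]
    rw [e1, e2]
    simp only [dotProduct, mulVec_diagonal]
    exact Finset.sum_congr rfl fun i _ => by ring
  have hBx : x ⬝ᵥ B *ᵥ x = ∑ i, ((Uᵀ *ᵥ (S *ᵥ x)) i) ^ 2 := by
    have e1 : x ⬝ᵥ B *ᵥ x = (S *ᵥ x) ⬝ᵥ ((1 : Matrix (Fin n) (Fin n) ℝ) *ᵥ (S *ᵥ x)) := by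
      conv_rhs => rw [conj_dot, Matrix.mul_one]
      rw [hSherm, hSS]
    have e2 : (S *ᵥ x) ⬝ᵥ ((1 : Matrix (Fin n) (Fin n) ℝ) *ᵥ (S *ᵥ x))
        = (Uᵀ *ᵥ (S *ᵥ x)) ⬝ᵥ ((1 : Matrix (Fin n) (Fin n) ℝ) *ᵥ (Uᵀ *ᵥ (S *ᵥ x))) := by
      conv_rhs => rw [conj_dot, transpose_transpose, Matrix.mul_one]
      rw [hUU]
    rw [e1, e2, one_mulVec]
    simp only [dotProduct]
    exact Finset.sum_congr rfl fun i _ => by ring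
  have hCdet : C.det = ∏ i, lam i := by
    have h := hCherm.det_eq_prod_eigenvalues
    simpa using h
  have hCdet2 : C.det = S.det⁻¹ * A.det * S.det⁻¹ := by
    rw [hCdef, det_mul, det_mul, det_nonsing_inv, Ring.inverse_eq_inv']
  have hdet : (∏ i, lam i) * B.det = A.det := by
    rw [← hCdet, hCdet2, ← hSdet]
    field_simp
  have hxB : 0 < x ⬝ᵥ B *ᵥ x := by have := hB.dotProduct_mulVec_pos hx; simpa using this
  rw [div_le_div_iff₀ hxB hB.det_pos, hAx, hBx, ← hdet]
  set w := Uᵀ *ᵥ (S *ᵥ x)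
  have key : ∑ i, lam i * (w i) ^ 2 ≤ (∏ i, lam i) * ∑ i, (w i) ^ 2 := by
    rw [Finset.mul_sum]
    refine Finset.sum_le_sum fun i _ => ?_
    refine mul_le_mul_of_nonneg_right ?_ (sq_nonneg _)
    calc lam i = lam i * 1 := (mul_one _).symm
      _ ≤ lam i * ∏ j ∈ Finset.univ.erase i, lam j := by
          refine mul_le_mul_of_nonneg_left ?_ (by linarith [hev i])
          calc (1:ℝ) = ∏ j ∈ Finset.univ.erase i, 1 := (Finset.prod_const_one).symm
            _ ≤ _ := Finset.prod_le_prod (fun _ _ => zero_le_one) (fun j _ => hev j)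
      _ = ∏ j, lam j := Finset.mul_prod_erase _ _ (Finset.mem_univ i)
  calc (∑ i, lam i * (w i) ^ 2) * B.det ≤ ((∏ i, lam i) * ∑ i, (w i) ^ 2) * B.det :=
        mul_le_mul_of_nonneg_right key hB.det_pos.le
    _ = (∏ i, lam i) * B.det * ∑ i, (w i) ^ 2 := by ring
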